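/- arXiv:2004.07681 — 4 statements merged into one kernel-verified Lean document; each statement's English description precedes it below -/
import Mathlib

section
/- Let N ≥ 1 and let H be an N×N Hermitian matrix over ℂ. Then the smallest eigenvalue of the de-signed matrix H^d is at most the smallest eigenvalue of H, i.e. λ_min(H^d) ≤ λ_min(H). -/
open Matrix Finset

/-- Rayleigh lower bound: for a Hermitian complex matrix `B`, the smallest eigenvalue times
the squared norm of a vector is at most the real part of the quadratic form. -/
lemma rayleigh_lb {n : Type*} [Fintype n] [DecidableEq n] [Nonempty n]
    {B : Matrix n n ℂ} (hB : B.IsHermitian) (x : n → ℂ) :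
    (⨅ i, hB.eigenvalues i) * (∑ i, Complex.normSq (x i)) ≤
      (star x ⬝ᵥ (B *ᵥ x)).re := by
  set U : Matrix n n ℂ := (hB.eigenvectorUnitary : Matrix n n ℂ) with hU
  set y : n → ℂ := star U *ᵥ x with hy
  have hUU : U * star U = 1 := (Matrix.mem_unitaryGroup_iff).mp hB.eigenvectorUnitary.2
  have hsy : star y = star x ᵥ* U := by
    rw [hy, star_mulVec]
    simp [Matrix.star_eq_conjTranspose]
  have h1 : star x ⬝ᵥ (B *ᵥ x)
      = star y ⬝ᵥ ((Matrix.diagonal (RCLike.ofReal ∘ hB.eigenvalues) : Matrix n n ℂ) *ᵥ y) := by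
    conv_lhs => rw [hB.spectral_theorem, Unitary.conjStarAlgAut_apply]
    rw [hsy, hy, ← Matrix.mulVec_mulVec, ← Matrix.mulVec_mulVec, Matrix.dotProduct_mulVec]
  have h2 : star x ⬝ᵥ x = star y ⬝ᵥ y := by
    rw [hsy, hy, ← Matrix.dotProduct_mulVec, Matrix.mulVec_mulVec, hUU, Matrix.one_mulVec]
  have key : ∀ z : ℂ, star z * z = (Complex.normSq z : ℂ) := fun z => by
    rw [Complex.star_def, ← Complex.normSq_eq_conj_mul_self]
  have hx2 : (∑ i, Complex.normSq (x i)) = ∑ i, Complex.normSq (y i) := by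
    have := congrArg Complex.re h2
    simpa [dotProduct, key, Complex.re_sum, Complex.normSq_apply] using this
  rw [h1]
  have h3 : star y ⬝ᵥ ((Matrix.diagonal (RCLike.ofReal ∘ hB.eigenvalues) : Matrix n n ℂ) *ᵥ y)
      = ∑ i, (hB.eigenvalues i : ℂ) * Complex.normSq (y i) := by
    simp only [dotProduct, Matrix.mulVec_diagonal, Pi.star_apply, Function.comp]
    refine Finset.sum_congr rfl fun i _ => ?_
    rw [← key (y i)]
    ring_nf
    exact mul_right_comm _ _ _
  rw [h3, hx2]
  have : (∑ i, (hB.eigenvalues i : ℂ) * Complex.normSq (y i)).re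
      = ∑ i, hB.eigenvalues i * Complex.normSq (y i) := by
    rw [Complex.re_sum]
    refine Finset.sum_congr rfl fun i _ => ?_
    norm_cast
  rw [this, Finset.mul_sum]
  refine Finset.sum_le_sum fun i _ => ?_
  have h4 : (⨅ j, hB.eigenvalues j) ≤ hB.eigenvalues i :=
    ciInf_le (Finite.bddBelow_range _) i
  exact mul_le_mul_of_nonneg_right h4 (Complex.normSq_nonneg _)

/-- For an N×N Hermitian matrix `H` over ℂ, the smallest eigenvalue of its
de-signed version `Hd` (same diagonal, off-diagonal entries `-(|H i j|)`) is at most the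
smallest eigenvalue of `H`. -/
theorem designed_min_eigenvalue_le
    (N : ℕ) (hN : 1 ≤ N)
    (H Hd : Matrix (Fin N) (Fin N) ℂ)
    (hH : H.IsHermitian) (hHd : Hd.IsHermitian)
    (hdiag : ∀ i, Hd i i = H i i)
    (hoff : ∀ i j, i ≠ j → Hd i j = -((‖H i j‖ : ℝ) : ℂ)) :
    (⨅ i, hHd.eigenvalues i) ≤ ⨅ i, hH.eigenvalues i := by
  haveI : Nonempty (Fin N) := ⟨⟨0, hN⟩⟩
  obtain ⟨j, hj⟩ : ∃ j, hH.eigenvalues j = ⨅ i, hH.eigenvalues i :=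
    exists_eq_ciInf_of_finite
  set v : Fin N → ℂ := ⇑(hH.eigenvectorBasis j) with hv
  set u : Fin N → ℂ := fun i => ((‖v i‖ : ℝ) : ℂ) with hu
  -- norm of the eigenvector is 1
  have hvnorm : ∑ i, Complex.normSq (v i) = 1 := by
    have h1 : ‖hH.eigenvectorBasis j‖ = 1 := hH.eigenvectorBasis.orthonormal.1 j
    have h2 : ‖hH.eigenvectorBasis j‖ ^ 2 = ∑ i, Complex.normSq (v i) := by
      rw [EuclideanSpace.norm_eq, Real.sq_sqrt (by positivity)]
      refine Finset.sum_congr rfl fun i _ => ?_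
      rw [Complex.sq_norm]
    rw [← h2, h1, one_pow]
  have husq : ∀ i, Complex.normSq (u i) = Complex.normSq (v i) := by
    intro i
    rw [hu]
    rw [Complex.normSq_ofReal, ← Complex.sq_norm (v i), sq]
  have hunorm : ∑ i, Complex.normSq (u i) = 1 := by
    simp only [husq]; exact hvnorm
  -- termwise comparison of quadratic forms
  have hterm : ∀ i k, (star u i * (Hd i k * u k)).re ≤ (star v i * (H i k * v k)).re := by
    intro i k
    by_cases hik : i = k
    · subst hik
      have e1 : star u i * (Hd i i * u i) = H i i * (Complex.normSq (v i) : ℂ) := by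
        simp only [hu, hdiag, Pi.star_apply]
        rw [Complex.star_def, Complex.conj_ofReal, Complex.normSq_eq_norm_sq]
        push_cast
        ring
      have e2 : star v i * (H i i * v i) = H i i * (Complex.normSq (v i) : ℂ) := by
        rw [Pi.star_apply, Complex.star_def,
          show (starRingEnd ℂ) (v i) * (H i i * v i)
            = H i i * ((starRingEnd ℂ) (v i) * v i) from by ring,
          ← Complex.normSq_eq_conj_mul_self]
      rw [e1, e2]
    · have e1 : star u i * (Hd i k * u k)
          = (-(‖H i k‖ * ‖v i‖ * ‖v k‖) : ℝ) := by
        simp only [hu, hoff i k hik, Pi.star_apply]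
        rw [Complex.star_def, Complex.conj_ofReal]
        push_cast
        ring
      rw [e1]
      have h2 : -(‖star v i * (H i k * v k)‖)
          ≤ (star v i * (H i k * v k)).re := by
        have := Complex.abs_re_le_norm (star v i * (H i k * v k))
        linarith [(abs_le.1 this).1]
      refine le_trans ?_ h2
      rw [Complex.ofReal_re]
      apply neg_le_neg
      exact le_of_eq (by
        rw [norm_mul, norm_mul, Pi.star_apply, Complex.star_def,
          Complex.norm_conj]
        ring)
  -- quadratic form comparison
  have hquad : (star u ⬝ᵥ (Hd *ᵥ u)).re ≤ (star v ⬝ᵥ (H *ᵥ v)).re := by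
    have expand : ∀ (M : Matrix (Fin N) (Fin N) ℂ) (w : Fin N → ℂ),
        (star w ⬝ᵥ (M *ᵥ w)).re = ∑ i, ∑ k, (star w i * (M i k * w k)).re := by
      intro M w
      rw [dotProduct, Complex.re_sum]
      refine Finset.sum_congr rfl fun i _ => ?_
      rw [Matrix.mulVec, dotProduct, Finset.mul_sum, Complex.re_sum]
    rw [expand, expand]
    exact Finset.sum_le_sum fun i _ => Finset.sum_le_sum fun k _ => hterm i k
  -- Rayleigh for H at its minimal eigenvector
  have hH_eq : (star v ⬝ᵥ (H *ᵥ v)).re = ⨅ i, hH.eigenvalues i := by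
    rw [← hj, hH.eigenvalues_eq j]
    rfl
  have hlb := rayleigh_lb hHd u
  rw [hunorm, mul_one] at hlb
  calc (⨅ i, hHd.eigenvalues i) ≤ (star u ⬝ᵥ (Hd *ᵥ u)).re := hlb
    _ ≤ (star v ⬝ᵥ (H *ᵥ v)).re := hquad
    _ = ⨅ i, hH.eigenvalues i := hH_eq
end

section
/- Let N ≥ 1 and let H be an N×N Hermitian matrix over ℂ. Suppose ψ ∈ ℂ^N is an eigenvector of H with eigenvalue λ_min(H) such that ψ_i ≠ 0 for every i, and suppose λ_min(H^d) = λ_min(H). Then there exists a diagonal unitary N×N matrix U such that U H U† = H^d. -/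
open Matrix

lemma rayleigh_min_le {N : ℕ} [NeZero N] (M : Matrix (Fin N) (Fin N) ℂ) (hM : M.IsHermitian)
    (v : Fin N → ℂ) :
    (⨅ i, hM.eigenvalues i) * (∑ i, Complex.normSq (v i)) ≤ (star v ⬝ᵥ M.mulVec v).re := by
  classical
  set U : Matrix (Fin N) (Fin N) ℂ := (hM.eigenvectorUnitary : Matrix (Fin N) (Fin N) ℂ) with hU
  set w : Fin N → ℂ := (star U).mulVec v with hw
  have hUU : U * star U = 1 := (Matrix.mem_unitaryGroup_iff).mp hM.eigenvectorUnitary.2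
  have hsw : star w = star v ᵥ* U := by
    rw [hw, star_mulVec]
    simp [Matrix.star_eq_conjTranspose, conjTranspose_conjTranspose]
  have key : star v ⬝ᵥ M.mulVec v
      = star w ⬝ᵥ (Matrix.diagonal (Complex.ofReal ∘ hM.eigenvalues)).mulVec w := by
    conv_lhs => rw [hM.spectral_theorem, Unitary.conjStarAlgAut_apply]
    rw [← mulVec_mulVec, ← mulVec_mulVec, dotProduct_mulVec, ← hsw]
    rfl
  have hnorm : ∑ i, Complex.normSq (v i) = ∑ i, Complex.normSq (w i) := by
    have h1 : star w ⬝ᵥ w = star v ⬝ᵥ v := by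
      rw [hsw, ← dotProduct_mulVec, hw, mulVec_mulVec, hUU, one_mulVec]
    have h2 : (star w ⬝ᵥ w) = ((∑ i, Complex.normSq (w i) : ℝ) : ℂ) := by
      simp [dotProduct, Pi.star_apply, ← Complex.normSq_eq_conj_mul_self]
    have h3 : (star v ⬝ᵥ v) = ((∑ i, Complex.normSq (v i) : ℝ) : ℂ) := by
      simp [dotProduct, Pi.star_apply, ← Complex.normSq_eq_conj_mul_self]
    have := h1
    rw [h2, h3] at this
    exact_mod_cast this.symm
  have hre : (star v ⬝ᵥ M.mulVec v).re = ∑ i, hM.eigenvalues i * Complex.normSq (w i) := by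
    rw [key]
    have : star w ⬝ᵥ (Matrix.diagonal (Complex.ofReal ∘ hM.eigenvalues)).mulVec w
        = ∑ i, ((hM.eigenvalues i * Complex.normSq (w i) : ℝ) : ℂ) := by
      simp only [dotProduct, mulVec_diagonal, Pi.star_apply, Function.comp]
      congr 1; ext i
      rw [Complex.star_def, show (starRingEnd ℂ) (w i) * ((hM.eigenvalues i : ℂ) * w i)
        = (hM.eigenvalues i : ℂ) * ((starRingEnd ℂ) (w i) * w i) from by ring,
        ← Complex.normSq_eq_conj_mul_self]
      push_cast
      ring
    rw [this]
    simp
  rw [hre, hnorm, Finset.mul_sum]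
  apply Finset.sum_le_sum
  intro i _
  exact mul_le_mul_of_nonneg_right (ciInf_le (Finite.bddBelow_range _) i) (Complex.normSq_nonneg _)

lemma re_eq_neg_abs {z : ℂ} (h : z.re = -‖z‖) : z = -((‖z‖ : ℝ) : ℂ) := by
  have him : z.im = 0 := by
    have h2 : (‖z‖) ^ 2 = z.re ^ 2 + z.im ^ 2 := by
      rw [Complex.sq_norm, Complex.normSq_apply]; ring
    have : z.im ^ 2 = 0 := by rw [h] at h2; nlinarith
    exact pow_eq_zero_iff (two_ne_zero) |>.mp this
  apply Complex.ext <;> simp [h, him]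

/-- If `H` is Hermitian with a nowhere-vanishing ground state (eigenvector for
the smallest eigenvalue), and the smallest eigenvalue of its de-signed version `Hd` equals
that of `H`, then `H` and `Hd` are related by conjugation with a diagonal unitary. -/
theorem designed_min_eigenvalue_eq_implies_diagonal_unitary
    (N : ℕ) (hN : 1 ≤ N)
    (H Hd : Matrix (Fin N) (Fin N) ℂ)
    (hH : H.IsHermitian) (hHd : Hd.IsHermitian)
    (hdiag : ∀ i, Hd i i = H i i)
    (hoff : ∀ i j, i ≠ j → Hd i j = -(‖H i j‖ : ℂ))
    (ψ : Fin N → ℂ)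
    (hψeig : H.mulVec ψ = ((⨅ i, hH.eigenvalues i : ℝ) : ℂ) • ψ)
    (hψnz : ∀ i, ψ i ≠ 0)
    (heq : (⨅ i, hHd.eigenvalues i) = ⨅ i, hH.eigenvalues i) :
    ∃ U : Matrix (Fin N) (Fin N) ℂ,
      U ∈ Matrix.unitaryGroup (Fin N) ℂ ∧ U.IsDiag ∧ U * H * Uᴴ = Hd := by
  classical
  have : NeZero N := ⟨by omega⟩
  set lam : ℝ := ⨅ i, hH.eigenvalues i with hlam
  set φ : Fin N → ℂ := fun i => ((‖ψ i‖ : ℝ) : ℂ) with hφ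
  set S : ℝ := ∑ i, Complex.normSq (ψ i) with hS
  -- quadratic form of H at ψ
  have hqH : (star ψ ⬝ᵥ H.mulVec ψ).re = lam * S := by
    rw [hψeig]
    have : star ψ ⬝ᵥ ((lam : ℂ) • ψ) = (lam : ℂ) * ((S : ℝ) : ℂ) := by
      rw [dotProduct_smul]
      congr 1
      simp [dotProduct, Pi.star_apply, ← Complex.normSq_eq_conj_mul_self, hS]
    rw [this]
    simp
  have hnormφ : ∑ i, Complex.normSq (φ i) = S := by
    simp [hφ, Complex.normSq_ofReal, hS, Complex.sq_norm, ← Complex.normSq_eq_norm_sq]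
    congr 1; ext i
    rw [← Complex.sq_norm]; ring
  -- lower bound for Hd at φ
  have hlow : lam * S ≤ (star φ ⬝ᵥ Hd.mulVec φ).re := by
    have := rayleigh_min_le Hd hHd φ
    rw [heq, hnormφ] at this
    exact this
  -- termwise comparison
  set f : Fin N × Fin N → ℝ := fun p => (star (φ p.1) * (Hd p.1 p.2 * φ p.2)).re with hf
  set g : Fin N × Fin N → ℝ := fun p => (star (ψ p.1) * (H p.1 p.2 * ψ p.2)).re with hg
  have hexpand : ∀ (M : Matrix (Fin N) (Fin N) ℂ) (v : Fin N → ℂ),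
      (star v ⬝ᵥ M.mulVec v).re = ∑ p : Fin N × Fin N, (star (v p.1) * (M p.1 p.2 * v p.2)).re := by
    intro M v
    rw [Fintype.sum_prod_type]
    simp [dotProduct, Matrix.mulVec, Finset.mul_sum, Complex.re_sum]
  have hfg : ∀ p : Fin N × Fin N, f p ≤ g p := by
    rintro ⟨i, j⟩
    by_cases hij : i = j
    · subst hij
      simp only [hf, hg, hdiag, Pi.star_apply]
      have e1 : star (φ i) * (H i i * φ i) = H i i * ((Complex.normSq (ψ i) : ℝ) : ℂ) := by
        simp only [hφ]
        rw [Complex.star_def, Complex.conj_ofReal]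
        rw [show ((‖ψ i‖ :ℝ):ℂ) * (H i i * ((‖ψ i‖:ℝ):ℂ))
          = H i i * (((‖ψ i‖:ℝ):ℂ) * ((‖ψ i‖:ℝ):ℂ)) from by ring]
        norm_cast
        rw [← Complex.sq_norm]
        ring_nf
      have e2 : star (ψ i) * (H i i * ψ i) = H i i * ((Complex.normSq (ψ i) : ℝ) : ℂ) := by
        rw [show star (ψ i) * (H i i * ψ i) = H i i * (star (ψ i) * ψ i) from by ring,
          Complex.star_def, ← Complex.normSq_eq_conj_mul_self]
      rw [e1, e2]
    · have e1 : f (i, j) = -(‖H i j‖ * ‖ψ i‖ * ‖ψ j‖) := by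
        simp only [hf, hφ, hoff i j hij]
        rw [Complex.star_def, Complex.conj_ofReal]
        have : ((‖ψ i‖:ℝ):ℂ) * (-(‖H i j‖ : ℂ) * ((‖ψ j‖:ℝ):ℂ))
            = -(((‖H i j‖ * ‖ψ i‖ * ‖ψ j‖ : ℝ)) : ℂ) := by
          push_cast; ring
        rw [this]
        simp
      rw [e1]
      have habs : ‖star (ψ i) * (H i j * ψ j)‖
          = ‖H i j‖ * ‖ψ i‖ * ‖ψ j‖ := by
        simp [_root_.map_mul]
        ring
      calc -(‖H i j‖ * ‖ψ i‖ * ‖ψ j‖)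
          = -‖star (ψ i) * (H i j * ψ j)‖ := by rw [habs]
        _ ≤ (star (ψ i) * (H i j * ψ j)).re := by
            have h := Complex.abs_re_le_norm (star (ψ i) * (H i j * ψ j))
            have := abs_le.mp h
            linarith [this.1]
  have hsumf : ∑ p : Fin N × Fin N, f p = (star φ ⬝ᵥ Hd.mulVec φ).re := (hexpand Hd φ).symm
  have hsumg : ∑ p : Fin N × Fin N, g p = lam * S := by rw [← hqH]; exact (hexpand H ψ).symm
  have hsum_eq : ∑ p : Fin N × Fin N, f p = ∑ p : Fin N × Fin N, g p := by
    have h1 : ∑ p : Fin N × Fin N, f p ≤ ∑ p : Fin N × Fin N, g p :=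
      Finset.sum_le_sum fun p _ => hfg p
    have h2 : lam * S ≤ ∑ p : Fin N × Fin N, f p := by rw [hsumf]; exact hlow
    rw [hsumg]; linarith
  have hterm : ∀ p : Fin N × Fin N, f p = g p :=
    fun p => (Finset.sum_eq_sum_iff_of_le (fun p _ => hfg p)).mp hsum_eq p (Finset.mem_univ p)
  -- key pointwise identity
  have hkey : ∀ i j, i ≠ j → star (ψ i) * (H i j * ψ j)
      = -(((‖H i j‖ * ‖ψ i‖ * ‖ψ j‖ : ℝ)) : ℂ) := by
    intro i j hij
    have habs : ‖star (ψ i) * (H i j * ψ j)‖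
        = ‖H i j‖ * ‖ψ i‖ * ‖ψ j‖ := by
      simp [_root_.map_mul]; ring
    have hre : (star (ψ i) * (H i j * ψ j)).re
        = -‖star (ψ i) * (H i j * ψ j)‖ := by
      have := (hterm (i, j)).symm
      simp only [hg, hf, hoff i j hij, hφ] at this
      rw [habs, this]
      rw [Complex.star_def, Complex.conj_ofReal]
      have : ((‖ψ i‖:ℝ):ℂ) * (-(‖H i j‖ : ℂ) * ((‖ψ j‖:ℝ):ℂ))
          = -(((‖H i j‖ * ‖ψ i‖ * ‖ψ j‖ : ℝ)) : ℂ) := by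
        push_cast; ring
      rw [this]
      simp
    have := re_eq_neg_abs hre
    rw [habs] at this
    exact this
  -- build the diagonal unitary
  set u : Fin N → ℂ := fun i => star (ψ i) / ((‖ψ i‖ : ℝ) : ℂ) with hu
  have habsnz : ∀ i, ((‖ψ i‖ : ℝ) : ℂ) ≠ 0 := by
    intro i
    simpa using (norm_ne_zero_iff.mpr (hψnz i))
  have huu : ∀ i, u i * star (u i) = 1 := by
    intro i
    simp only [hu, star_div₀, star_star, Complex.star_def, Complex.conj_conj,
      Complex.conj_ofReal]
    rw [div_mul_div_comm, ← Complex.normSq_eq_conj_mul_self]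
    rw [show ((‖ψ i‖:ℝ):ℂ) * ((‖ψ i‖:ℝ):ℂ)
      = ((Complex.normSq (ψ i) : ℝ) : ℂ) from by
        norm_cast; rw [Complex.normSq_eq_norm_sq, sq]]
    exact div_self (by exact_mod_cast (Complex.normSq_pos.mpr (hψnz i)).ne')
  refine ⟨Matrix.diagonal u, ?_, Matrix.isDiag_diagonal u, ?_⟩
  · rw [Matrix.mem_unitaryGroup_iff]
    rw [Matrix.star_eq_conjTranspose, Matrix.diagonal_conjTranspose,
      Matrix.diagonal_mul_diagonal]
    ext i j
    rcases eq_or_ne i j with h | h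
    · subst h
      simp only [Matrix.diagonal_apply_eq, Pi.mul_apply, Pi.star_apply, huu i,
        Matrix.one_apply_eq]
    · rw [Matrix.diagonal_apply_ne _ h, Matrix.one_apply_ne h]
  · ext i j
    rw [Matrix.diagonal_conjTranspose,
      show Matrix.diagonal u * H * Matrix.diagonal (star u)
        = Matrix.diagonal u * (H * Matrix.diagonal (star u)) from mul_assoc _ _ _,
      Matrix.diagonal_mul, Matrix.mul_diagonal, Pi.star_apply]
    rcases eq_or_ne i j with h | h
    · subst h
      rw [hdiag]
      rw [show u i * (H i i * star (u i)) = H i i * (u i * star (u i)) from by ring, huu i,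
        mul_one]
    · have hsj : star (u j) = ψ j / ((‖ψ j‖ : ℝ) : ℂ) := by
        simp only [hu, star_div₀, star_star, Complex.star_def, Complex.conj_conj,
          Complex.conj_ofReal]
      rw [hsj, hoff i j h, hu]
      rw [show star (ψ i) / ((‖ψ i‖ : ℝ) : ℂ)
          * (H i j * (ψ j / ((‖ψ j‖ : ℝ) : ℂ)))
          = (star (ψ i) * (H i j * ψ j))
            / (((‖ψ i‖ : ℝ) : ℂ) * ((‖ψ j‖ : ℝ) : ℂ)) from by ring,
        hkey i j h]
      rw [neg_div, neg_inj]
      push_cast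
      rw [mul_assoc]
      exact mul_div_cancel_right₀ _ (mul_ne_zero (habsnz i) (habsnz j))
end

section
/- Fix n ≥ 1, weights w : Finset(Fin n) → ℝ with w(S) ≥ 0 for all S, and signs ε : Finset(Fin n) → ℝ with ε(S) ∈ {−1, +1} for all S. Then for all x, e : Fin n → ZMod 2, one has f(x + e) − f(x) ≤ g(e). -/
open Finset

/-- The character `χ_S(x)`: equals `+1` if `Σ_{i∈S} x_i = 0` in `ZMod 2`, and `-1` otherwise. -/
noncomputable def chi {n : ℕ} (S : Finset (Fin n)) (x : Fin n → ZMod 2) : ℝ :=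
  if (∑ i ∈ S, x i) = 0 then 1 else -1

/-- The eigenvalue function of an X-diagonal Hamiltonian (shifted by a constant). -/
noncomputable def fEig {n : ℕ} (w ε : Finset (Fin n) → ℝ) (x : Fin n → ZMod 2) : ℝ :=
  ∑ S : Finset (Fin n), w S * (1 - ε S * chi S x)

/-- The eigenvalue function of the de-signed counterpart. -/
noncomputable def gEig {n : ℕ} (w : Finset (Fin n) → ℝ) (x : Fin n → ZMod 2) : ℝ :=
  ∑ S : Finset (Fin n), w S * (1 - chi S x)

lemma chi_mul {n : ℕ} (S : Finset (Fin n)) (x e : Fin n → ZMod 2) :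
    chi S (x + e) = chi S x * chi S e := by
  unfold chi
  have : (∑ i ∈ S, (x + e) i) = (∑ i ∈ S, x i) + (∑ i ∈ S, e i) := by
    simp [Finset.sum_add_distrib]
  rw [this]
  rcases (by decide : ∀ a : ZMod 2, a = 0 ∨ a = 1) (∑ i ∈ S, x i) with h1 | h1 <;>
    rcases (by decide : ∀ a : ZMod 2, a = 0 ∨ a = 1) (∑ i ∈ S, e i) with h2 | h2 <;>
    simp [h1, h2] <;> first | decide | norm_num

/-- For nonnegative weights `w` and signs `ε S ∈ {−1,+1}`,
`f(x+e) − f(x) ≤ g(e)` for all configurations `x, e`. -/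
theorem fEig_add_sub_le_gEig
    (n : ℕ) (hn : 1 ≤ n)
    (w ε : Finset (Fin n) → ℝ)
    (hw : ∀ S, 0 ≤ w S)
    (hε : ∀ S, ε S = 1 ∨ ε S = -1) :
    ∀ x e : Fin n → ZMod 2, fEig w ε (x + e) - fEig w ε x ≤ gEig w e := by
  intro x e
  unfold fEig gEig
  rw [← Finset.sum_sub_distrib]
  apply Finset.sum_le_sum
  intro S _
  rw [chi_mul]
  have hchix : chi S x = 1 ∨ chi S x = -1 := by unfold chi; split <;> simp
  have hchie : chi S e = 1 ∨ chi S e = -1 := by unfold chi; split <;> simp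
  rcases hε S with h1 | h1 <;> rcases hchix with h2 | h2 <;> rcases hchie with h3 | h3 <;>
    simp [h1, h2, h3] <;> nlinarith [hw S]
end

section
/- Fix n ≥ 1, weights w : Finset(Fin n) → ℝ with w(S) ≥ 0 for all S, and signs ε : Finset(Fin n) → ℝ with ε(S) ∈ {−1, +1} for all S. Let x_G : Fin n → ZMod 2 be any point at which f attains its minimum over Fin n → ZMod 2. Then the spectral gap of f is at most the spectral gap of g: min_{x ≠ x_G} f(x) − f(x_G) ≤ min_{e ≠ 0} g(e). (Note that g attains its minimum value 0 at e = 0, so the right-hand side equals the gap of the de-signed Hamiltonian.) -/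
open Finset

lemma chi_add {n : ℕ} (S : Finset (Fin n)) (x e : Fin n → ZMod 2) :
    chi S (fun i => x i + e i) = chi S x * chi S e := by
  unfold chi
  rw [Finset.sum_add_distrib]
  have hz : ∀ a : ZMod 2, a = 0 ∨ a = 1 := by decide
  rcases hz (∑ i ∈ S, x i) with hx | hx <;> rcases hz (∑ i ∈ S, e i) with he | he <;>
    simp [hx, he] <;> norm_num <;> decide

/-- For nonnegative weights `w` and signs `ε S ∈ {−1,+1}`, if `xG` minimizes `f`,
then the spectral gap of `f` is at most the spectral gap of `g`:
`min_{x ≠ xG} f(x) − f(xG) ≤ min_{e ≠ 0} g(e)`. -/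
theorem gap_le_designed_gap
    (n : ℕ) (hn : 1 ≤ n)
    (w ε : Finset (Fin n) → ℝ)
    (hw : ∀ S, 0 ≤ w S)
    (hε : ∀ S, ε S = 1 ∨ ε S = -1)
    (xG : Fin n → ZMod 2)
    (hxG : ∀ x, fEig w ε xG ≤ fEig w ε x) :
    (⨅ x : {x : Fin n → ZMod 2 // x ≠ xG}, (fEig w ε x - fEig w ε xG)) ≤
      ⨅ e : {e : Fin n → ZMod 2 // e ≠ 0}, gEig w e := by
  have hi : Nonempty (Fin n) := ⟨⟨0, hn⟩⟩
  have hne : Nonempty {e : Fin n → ZMod 2 // e ≠ 0} := by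
    refine ⟨⟨fun _ => 1, fun h => ?_⟩⟩
    have := congrFun h ⟨0, hn⟩
    simp at this
  apply le_ciInf
  rintro ⟨e, he⟩
  have hx : (fun i => xG i + e i) ≠ xG := by
    intro h
    apply he
    funext i
    have h2 := congrFun h i
    simpa using (add_left_cancel (a := xG i) (by simpa using h2) : e i = 0)
  have hbdd : BddBelow (Set.range fun x : {x : Fin n → ZMod 2 // x ≠ xG} =>
      fEig w ε x - fEig w ε xG) := by
    refine ⟨0, ?_⟩
    rintro y ⟨x, rfl⟩
    exact sub_nonneg.2 (hxG x)
  refine le_trans (ciInf_le hbdd ⟨_, hx⟩) ?_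
  unfold fEig gEig
  rw [← Finset.sum_sub_distrib]
  apply Finset.sum_le_sum
  intro S _
  have hc := chi_add S xG e
  have hx1 : chi S xG = 1 ∨ chi S xG = -1 := by unfold chi; split <;> simp
  have he1 : chi S e = 1 ∨ chi S e = -1 := by unfold chi; split <;> simp
  rcases hε S with h1 | h1 <;> rcases hx1 with h2 | h2 <;> rcases he1 with h3 | h3 <;>
    rw [hc] <;> rw [h1, h2, h3] <;> nlinarith [hw S]
end
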